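/- For all integers n ≥ 0, the biperiodic Fibonacci number satisfies t_n = a^{ξ(n-1)} · Σ_{i=0}^{⌊(n-1)/2⌋} C(n-i-1, i) · (ab)^{⌊(n-1)/2⌋ - i}, where C denotes the ordinary binomial coefficient and ξ(m) = m mod 2. -/

import Mathlib

open Finset PowerSeries

variable {R : Type*} [CommRing R]

/-- The Gaussian (q-)binomial coefficient, via the Pascal-type recurrence
`[n+1, k+1] = q^(n-k) [n, k] + [n, k+1]`. -/
def qbinom (q : R) : ℕ → ℕ → R
  | _, 0 => 1
  | 0, _ + 1 => 0
  | n + 1, k + 1 => qbinom q n k * q ^ (n - k) + qbinom q n (k + 1)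

/-- The q-biperiodic Fibonacci sequence. -/
def biF (a b q : R) : ℕ → R
  | 0 => 0
  | 1 => 1
  | n + 2 => (if (n + 2) % 2 = 0 then a else b) * biF a b q (n + 1) + q ^ n * biF a b q n

/-- The auxiliary q-biperiodic Fibonacci sequence (same recurrence, initial values 1, 0). -/
def biFhat (a b q : R) : ℕ → R
  | 0 => 1
  | 1 => 0
  | n + 2 => (if (n + 2) % 2 = 0 then a else b) * biFhat a b q (n + 1) + q ^ n * biFhat a b q n

/-- The biperiodic Fibonacci sequence. -/
def biT (a b : ℕ) : ℕ → ℕ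
  | 0 => 0
  | 1 => 1
  | n + 2 => (if (n + 2) % 2 = 0 then a else b) * biT a b (n + 1) + biT a b n

/-- The Schur polynomials D_n(q). -/
def schurD (q : R) : ℕ → R
  | 0 => 0
  | 1 => 1
  | n + 2 => schurD q (n + 1) + q ^ n * schurD q n

/-- The auxiliary Schur polynomials with initial values 1, 0. -/
def schurDhat (q : R) : ℕ → R
  | 0 => 1
  | 1 => 0
  | n + 2 => schurDhat q (n + 1) + q ^ n * schurDhat q n

/-- The shifted q-biperiodic Fibonacci sequence F^(s)_n(q). -/
def biFs (a b q : R) (s : ℕ) : ℕ → R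
  | 0 => 0
  | 1 => 1
  | n + 2 =>
      (if (n + 2) % 2 = 0 then a ^ ((s + 1) % 2) * b ^ (1 - (s + 1) % 2)
       else a ^ (1 - (s + 1) % 2) * b ^ ((s + 1) % 2)) * biFs a b q s (n + 1)
        + q ^ (n + s) * biFs a b q s n

lemma lemA (x m : ℕ) :
    ∑ i ∈ range (m+1), Nat.choose (2*m+1-i) i * x^(m-i) =
      ∑ i ∈ range (m+1), Nat.choose (2*m-i) i * x^(m-i) +
      ∑ i ∈ range m, Nat.choose (2*m-1-i) i * x^(m-1-i) := by
  rw [Finset.sum_range_succ' (fun i => Nat.choose (2*m+1-i) i * x^(m-i)) m,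
      Finset.sum_range_succ' (fun i => Nat.choose (2*m-i) i * x^(m-i)) m]
  simp only [Nat.sub_zero, Nat.choose_zero_right, one_mul]
  have h : ∀ j ∈ range m,
      Nat.choose (2*m+1-(j+1)) (j+1) * x^(m-(j+1)) =
      Nat.choose (2*m-1-j) j * x^(m-1-j) + Nat.choose (2*m-(j+1)) (j+1) * x^(m-(j+1)) := by
    intro j hj
    rw [Finset.mem_range] at hj
    have e1 : 2*m+1-(j+1) = (2*m-1-j)+1 := by omega
    have e2 : 2*m-(j+1) = 2*m-1-j := by omega
    have e3 : m-(j+1) = m-1-j := by omega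
    rw [e1, e2, e3, Nat.choose_succ_succ]
    ring
  rw [Finset.sum_congr rfl h, Finset.sum_add_distrib]
  ring

lemma lemB (x m : ℕ) :
    ∑ i ∈ range (m+2), Nat.choose (2*m+2-i) i * x^(m+1-i) =
      x * ∑ i ∈ range (m+1), Nat.choose (2*m+1-i) i * x^(m-i) +
      ∑ i ∈ range (m+1), Nat.choose (2*m-i) i * x^(m-i) := by
  rw [Finset.sum_range_succ' (fun i => Nat.choose (2*m+2-i) i * x^(m+1-i)) (m+1),
      Finset.mul_sum,
      Finset.sum_range_succ' (fun i => x * (Nat.choose (2*m+1-i) i * x^(m-i))) m]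
  have h : ∀ j ∈ range (m+1),
      Nat.choose (2*m+2-(j+1)) (j+1) * x^(m+1-(j+1)) =
      Nat.choose (2*m-j) j * x^(m-j) + Nat.choose (2*m-j) (j+1) * x^(m-j) := by
    intro j hj
    rw [Finset.mem_range] at hj
    have e1 : 2*m+2-(j+1) = (2*m-j)+1 := by omega
    have e3 : m+1-(j+1) = m-j := by omega
    rw [e1, e3, Nat.choose_succ_succ]
    ring
  rw [Finset.sum_congr rfl h, Finset.sum_add_distrib]
  rw [Finset.sum_range_succ (fun i => Nat.choose (2*m-i) i * x^(m-i)) m]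
  rw [Finset.sum_range_succ (fun j => Nat.choose (2*m-j) (j+1) * x^(m-j)) m]
  have hterm : ∀ j ∈ range m,
      x * (Nat.choose (2*m+1-(j+1)) (j+1) * x^(m-(j+1))) =
      Nat.choose (2*m-j) (j+1) * x^(m-j) := by
    intro j hj
    rw [Finset.mem_range] at hj
    have e1 : 2*m+1-(j+1) = 2*m-j := by omega
    have e2 : x * x^(m-(j+1)) = x^(m-j) := by
      rw [← pow_succ']
      congr 1
      omega
    rw [e1, mul_comm x, mul_assoc, mul_comm (x^(m-(j+1))) x, e2]
  rw [Finset.sum_congr rfl hterm]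
  have hlast : Nat.choose (2*m-m) (m+1) = 0 := Nat.choose_eq_zero_of_lt (by omega)
  simp only [hlast, zero_mul, add_zero, Nat.sub_zero, Nat.choose_zero_right, one_mul,
    Nat.sub_self, pow_zero, mul_one]
  have : x * x^m = x^(m+1) := by rw [← pow_succ']
  ring_nf
  rw [Finset.sum_congr rfl (fun i _ => Nat.mul_comm ((m*2-i).choose i) (x^(m-i)))]
  omega

lemma pairlem (a b : ℕ) : ∀ m : ℕ,
    biT a b (2*m+1) = (∑ i ∈ range (m+1), Nat.choose (2*m-i) i * (a*b)^(m-i)) ∧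
    biT a b (2*m+2) = a * ∑ i ∈ range (m+1), Nat.choose (2*m+1-i) i * (a*b)^(m-i) := by
  intro m
  induction m with
  | zero =>
    constructor
    · simp [biT]
    · show biT a b (0+2) = _
      rw [biT]
      simp [biT]
  | succ m ih =>
    obtain ⟨ih1, ih2⟩ := ih
    have e1 : 2*(m+1)+1 = (2*m+1)+2 := by ring
    have e2 : 2*(m+1)+2 = (2*m+2)+2 := by ring
    have hodd : biT a b (2*(m+1)+1)
        = ∑ i ∈ range (m+2), Nat.choose (2*m+2-i) i * (a*b)^(m+1-i) := by
      rw [e1, biT]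
      rw [if_neg (by omega : ¬ ((2*m+1)+2) % 2 = 0)]
      have e3 : 2*m+1+1 = 2*m+2 := by ring
      rw [e3, ih1, ih2, lemB]
      ring
    constructor
    · have : 2*(m+1) = 2*m+2 := by ring
      rw [this] at hodd ⊢
      convert hodd using 3 <;> omega
    · rw [e2, biT]
      simp only [if_pos (by omega : ((2*m+2)+2) % 2 = 0)]
      have e3 : 2*m+2+1 = 2*(m+1)+1 := by ring
      rw [e3, hodd, ih2]
      rw [mul_comm a b] at *
      have key : ∑ i ∈ range (m+2), Nat.choose (2*(m+1)+1-i) i * (b*a)^(m+1-i)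
          = ∑ i ∈ range (m+2), Nat.choose (2*m+2-i) i * (b*a)^(m+1-i)
            + ∑ i ∈ range (m+1), Nat.choose (2*m+1-i) i * (b*a)^(m-i) := by
        have hA := lemA (b*a) (m+1)
        rw [hA]
        congr 1
        all_goals
          apply Finset.sum_congr rfl
          intro i _
          congr 2 <;> omega
      rw [key, mul_add]

theorem stmt1 (a b : ℕ) (ha : 0 < a) (hb : 0 < b) (n : ℕ) :
    biT a b n = a ^ ((n - 1) % 2) *
      ∑ i ∈ Finset.range ((n + 1) / 2),
        Nat.choose (n - i - 1) i * (a * b) ^ ((n - 1) / 2 - i) := by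
  match n with
  | 0 => simp [biT]
  | (n+1) =>
    rcases Nat.even_or_odd n with ⟨m, hm⟩ | ⟨m, hm⟩
    · -- n = 2m, n+1 = 2m+1 odd
      subst hm
      rw [show m + m + 1 = 2*m+1 by ring]
      have h := (pairlem a b m).1
      rw [h]
      have : (2*m+1-1) % 2 = 0 := by omega
      rw [this, pow_zero, one_mul]
      have hr : (2*m+1+1)/2 = m+1 := by omega
      rw [hr]
      apply Finset.sum_congr rfl
      intro i hi
      rw [Finset.mem_range] at hi
      congr 2 <;> omega
    · -- n = 2m+1, n+1 = 2m+2 even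
      subst hm
      have h := (pairlem a b m).2
      rw [h]
      have : (2*m+1+1-1) % 2 = 1 := by omega
      rw [this, pow_one]
      have hr : (2*m+1+1+1)/2 = m+1 := by omega
      rw [hr]
      congr 1
      apply Finset.sum_congr rfl
      intro i hi
      rw [Finset.mem_range] at hi
      congr 2 <;> omega
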